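/- Let K/F_q be a function field of genus g ≥ 2 obtained as K = F_q(T, y) with y^ℓ = T² + aT + b, where ℓ ≥ 5 is prime, gcd(q, 2ℓ) = 1, a, b ∈ F_q, and a² − 4b ≠ 0. Then K is a hyperelliptic function field: it contains a rational subfield F_q(x) with [K : F_q(x)] = 2. -/

import Mathlib

open Polynomial IntermediateField

/-- Key auxiliary lemma: if `y` is transcendental over `Fq` and `ℓ` is odd, then no element
`t` of `Fq(y)` satisfies `t ^ 2 + a t + b = y ^ ℓ`. -/
private lemma no_root_aux {Fq K : Type*} [Field Fq] [Field K] [Algebra Fq K]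
    {y : K} (hy : Transcendental Fq y) {ℓ : ℕ} (hodd : Odd ℓ)
    (a b : Fq) (t : K) (ht : t ∈ IntermediateField.adjoin Fq {y}) :
    t ^ 2 + algebraMap Fq K a * t + algebraMap Fq K b ≠ y ^ ℓ := by
  have hℓ0 : ℓ ≠ 0 := by rintro rfl; simpa using hodd
  have hinj : ∀ p : Fq[X], aeval y p = 0 → p = 0 := transcendental_iff.mp hy
  obtain ⟨P, Q, rfl⟩ := (mem_adjoin_simple_iff Fq _).mp ht
  intro heq
  by_cases hQ : Q = 0
  · rw [hQ, map_zero, div_zero] at heq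
    simp only [ne_eq, zero_pow, mul_zero, zero_add, add_zero, pow_eq_zero_iff,
      OfNat.ofNat_ne_zero, not_false_eq_true] at heq
    have h0 : (X ^ ℓ - C b : Fq[X]) = 0 := by
      apply hinj
      simp only [map_sub, map_pow, aeval_X, aeval_C]
      rw [sub_eq_zero, ← heq]
    have h1 : (X ^ ℓ - C b : Fq[X]).natDegree = ℓ := natDegree_X_pow_sub_C
    rw [h0, natDegree_zero] at h1
    exact hℓ0 h1.symm
  · have hq0 : aeval y Q ≠ 0 := fun h => hQ (hinj _ h)
    have heq2 : (aeval y P) ^ 2 + algebraMap Fq K a * aeval y P * aeval y Q +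
        algebraMap Fq K b * (aeval y Q) ^ 2 = y ^ ℓ * (aeval y Q) ^ 2 := by
      field_simp at heq
      have h3 : aeval y Q * ((aeval y P) ^ 2 + algebraMap Fq K a * aeval y P * aeval y Q +
          algebraMap Fq K b * (aeval y Q) ^ 2) =
          aeval y Q * (y ^ ℓ * (aeval y Q) ^ 2) := by linear_combination (aeval y Q) * heq
      exact mul_left_cancel₀ hq0 h3
    have hpoly : (P ^ 2 + C a * P * Q + C b * Q ^ 2 : Fq[X]) = X ^ ℓ * Q ^ 2 := by
      rw [← sub_eq_zero]
      apply hinj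
      simp only [map_sub, map_add, map_mul, map_pow, aeval_X, aeval_C]
      rw [sub_eq_zero]
      exact heq2
    have hQ2 : (Q ^ 2 : Fq[X]) ≠ 0 := pow_ne_zero _ hQ
    have hrhs : (X ^ ℓ * Q ^ 2 : Fq[X]).natDegree = ℓ + 2 * Q.natDegree := by
      rw [natDegree_mul (pow_ne_zero _ X_ne_zero) hQ2, natDegree_X_pow, natDegree_pow]
    by_cases hP : P = 0
    · rw [hP] at hpoly
      have hcb : (C b * Q ^ 2 : Fq[X]) = X ^ ℓ * Q ^ 2 := by linear_combination hpoly
      have hcb : (C b : Fq[X]) = X ^ ℓ := mul_right_cancel₀ hQ2 hcb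
      have := congrArg natDegree hcb
      rw [natDegree_C, natDegree_X_pow] at this
      exact hℓ0 this.symm
    · have hCaPQ : (C a * P * Q : Fq[X]).natDegree ≤ P.natDegree + Q.natDegree := by
        refine natDegree_mul_le.trans ?_
        exact Nat.add_le_add_right (natDegree_C_mul_le a P) _
      have hCbQ2 : (C b * Q ^ 2 : Fq[X]).natDegree ≤ 2 * Q.natDegree := by
        refine (natDegree_C_mul_le b _).trans ?_
        rw [natDegree_pow]
      have hP2 : (P ^ 2 : Fq[X]).natDegree = 2 * P.natDegree := natDegree_pow P 2
      by_cases hmn : Q.natDegree < P.natDegree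
      · have hlow : (C a * P * Q + C b * Q ^ 2 : Fq[X]).natDegree < (P ^ 2).natDegree := by
          refine lt_of_le_of_lt (natDegree_add_le _ _) ?_
          rw [hP2]
          exact max_lt (lt_of_le_of_lt hCaPQ (by omega)) (lt_of_le_of_lt hCbQ2 (by omega))
        have hpoly' : (P ^ 2 + (C a * P * Q + C b * Q ^ 2) : Fq[X]) = X ^ ℓ * Q ^ 2 := by
          rw [← add_assoc]; exact hpoly
        have hdeg := congrArg natDegree hpoly'
        rw [natDegree_add_eq_left_of_natDegree_lt hlow, hP2, hrhs] at hdeg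
        obtain ⟨k, hk⟩ := hodd
        omega
      · push_neg at hmn
        have hle : (P ^ 2 + C a * P * Q + C b * Q ^ 2 : Fq[X]).natDegree
            ≤ 2 * Q.natDegree := by
          refine (natDegree_add_le _ _).trans (max_le ?_ hCbQ2)
          refine (natDegree_add_le _ _).trans (max_le ?_ ?_)
          · rw [hP2]; omega
          · omega
        rw [hpoly, hrhs] at hle
        omega

set_option maxHeartbeats 1000000 in
set_option synthInstance.maxHeartbeats 400000 in
/-- The function field K = F_q(T, y) with y^ℓ = T² + aT + b (ℓ ≥ 5 prime,
gcd(q, 2ℓ) = 1, a² − 4b ≠ 0) is hyperelliptic: it contains a rational subfield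
F_q(x) with [K : F_q(x)] = 2. -/
theorem stmt_19 (q ℓ : ℕ) (hq : IsPrimePow q) (hℓ : ℓ.Prime) (hℓ5 : 5 ≤ ℓ)
    (hcop : Nat.gcd q (2 * ℓ) = 1)
    (Fq : Type*) [Field Fq] [Fintype Fq] (hF : Fintype.card Fq = q)
    (a b : Fq) (hab : a ^ 2 - 4 * b ≠ 0)
    (K : Type*) [Field K] [Algebra Fq K] (T y : K)
    (hT : Transcendental Fq T)
    (hy : y ^ ℓ = T ^ 2 + algebraMap Fq K a * T + algebraMap Fq K b)
    (hgen : IntermediateField.adjoin Fq {T, y} = ⊤) :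
    ∃ x : K, Transcendental Fq x ∧
      Module.finrank (↥(IntermediateField.adjoin Fq {x})) K = 2 := by
  classical
  have hodd : Odd ℓ := hℓ.odd_of_ne_two (by omega)
  have hℓ0 : ℓ ≠ 0 := by omega
  -- `y` is transcendental over `Fq`
  have hyT : Transcendental Fq y := by
    have hfT : Transcendental Fq (aeval T (X ^ 2 + C a * X + C b : Fq[X])) := by
      apply hT.aeval
      · have h2 : (X ^ 2 + (C a * X + C b) : Fq[X]).natDegree = 2 := by
          rw [natDegree_add_eq_left_of_natDegree_lt, natDegree_X_pow]
          rw [natDegree_X_pow]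
          refine lt_of_le_of_lt (natDegree_add_le _ _) ?_
          refine max_lt (lt_of_le_of_lt (natDegree_C_mul_le a X) ?_) ?_
          · rw [natDegree_X]; omega
          · rw [natDegree_C]; omega
        rw [add_assoc, h2]; omega
      · have hm : (X ^ 2 + C a * X + C b : Fq[X]).Monic := by
          rw [add_assoc]
          exact monic_X_pow_add (lt_of_le_of_lt degree_linear_le (by norm_num))
        rw [Monic.leadingCoeff hm]
        exact one_mem _
    have hylT : Transcendental Fq (y ^ ℓ) := by
      rw [hy]
      simpa using hfT
    have : Transcendental Fq (aeval y (X ^ ℓ : Fq[X])) := by simpa using hylT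
    exact (transcendental_aeval_iff.mp this).1
  refine ⟨y, hyT, ?_⟩
  set E := IntermediateField.adjoin Fq {y} with hE
  set yE : E := IntermediateField.AdjoinSimple.gen Fq y
  set A : ↥E := algebraMap Fq ↥E a
  set B : ↥E := algebraMap Fq ↥E b
  set g : (↥E)[X] := X ^ 2 + C A * X + C (B - yE ^ ℓ) with hg
  have hmonic : g.Monic := by
    rw [hg, add_assoc]
    refine monic_X_pow_add (lt_of_le_of_lt ?_ (by norm_num : (1 : WithBot ℕ) < 2))
    exact degree_linear_le
  have hgdeg : g.natDegree = 2 := by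
    rw [hg, add_assoc, natDegree_add_eq_left_of_natDegree_lt, natDegree_X_pow]
    rw [natDegree_X_pow]
    refine lt_of_le_of_lt (natDegree_add_le _ _) ?_
    refine max_lt (lt_of_le_of_lt (natDegree_C_mul_le A X) ?_) ?_
    · rw [natDegree_X]; omega
    · rw [natDegree_C]; omega
  have hA : (algebraMap ↥E K) A = algebraMap Fq K a :=
    (IsScalarTower.algebraMap_apply Fq ↥E K a).symm
  have hB : (algebraMap ↥E K) B = algebraMap Fq K b :=
    (IsScalarTower.algebraMap_apply Fq ↥E K b).symm
  have hyE : (algebraMap ↥E K) yE = y := IntermediateField.AdjoinSimple.algebraMap_gen Fq y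
  have hg0 : aeval T g = 0 := by
    rw [hg]
    simp only [map_add, map_pow, map_mul, aeval_X, aeval_C, map_sub]
    rw [hA, hB, hyE, hy]; ring
  have hint : IsIntegral (↥E) T := ⟨g, hmonic, hg0⟩
  -- g is irreducible over E = Fq(y)
  have hirr : Irreducible g := by
    rw [hmonic.irreducible_iff_roots_eq_zero_of_degree_le_three (by omega) (by omega)]
    refine Multiset.eq_zero_of_forall_notMem fun r hr => ?_
    have hroot : g.eval r = 0 := (mem_roots hmonic.ne_zero).mp hr
    have hrK : ((algebraMap ↥E K) r ^ 2 + algebraMap Fq K a * ((algebraMap ↥E K) r) +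
        algebraMap Fq K b = y ^ ℓ) := by
      have := congrArg (algebraMap ↥E K) hroot
      rw [hg] at this
      simp only [eval_add, eval_pow, eval_mul, eval_X, eval_C, eval_sub, map_add, map_pow,
        map_mul, map_sub, map_zero, hA, hB, hyE] at this
      linear_combination this
    have hmem : (algebraMap ↥E K) r ∈ IntermediateField.adjoin Fq {y} := by
      rw [IntermediateField.algebraMap_apply]; exact r.2
    exact no_root_aux hyT hodd a b _ hmem hrK
  have hmin : minpoly (↥E) T = g := (minpoly.eq_of_irreducible_of_monic hirr hg0 hmonic).symm
  -- E(T) = K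
  have h1 : IntermediateField.adjoin (↥E) {T, y} = ⊤ :=
    IntermediateField.adjoin_eq_top_of_adjoin_eq_top Fq hgen
  have h2 : IntermediateField.adjoin (↥E) {T, y} = IntermediateField.adjoin (↥E) {T} := by
    apply le_antisymm
    · rw [IntermediateField.adjoin_le_iff]
      rintro x hx
      rcases hx with rfl | rfl
      · exact IntermediateField.subset_adjoin _ _ (Set.mem_singleton _)
      · have : (algebraMap ↥E K) yE ∈ IntermediateField.adjoin (↥E) {T} :=
          (IntermediateField.adjoin (↥E) {T}).algebraMap_mem yE
        rwa [IntermediateField.AdjoinSimple.algebraMap_gen] at this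
    · exact IntermediateField.adjoin.mono _ _ _ (Set.singleton_subset_iff.mpr (Set.mem_insert _ _))
  have htop : IntermediateField.adjoin (↥E) {T} = ⊤ := h2.symm.trans h1
  have h3 : Module.finrank (↥E) (IntermediateField.adjoin (↥E) {T}) = 2 := by
    rw [IntermediateField.adjoin.finrank hint, hmin, hgdeg]
  rw [htop, IntermediateField.finrank_top'] at h3
  exact h3
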